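/- Fix integers d ≥ 1 and b with 2 ≤ b ≤ d + 1, and consider the RBF kernel k(x, x′) = exp(−½‖x − x′‖²) on ℝ^d. Then for every ε > 0 there exist points Z : Fin b → ℝ^d such that, writing K for the b×b matrix with entries K_{jl} = k(Z_j, Z_l), and G for the d×b matrix with entries G_{ij} = (Z_j)_i · exp(−½‖Z_j‖²), the matrix K is invertible and d − trace( G · K⁻¹ · Gᵀ ) ≤ (1 + d − b) + ε. -/

import Mathlib

open Matrix Finset

namespace RBFAux


lemma sum_indic (d m : ℕ) (hm : m ≤ d) (x : ℝ) :
    (∑ i : Fin d, if m = (i : ℕ) + 1 then x else 0) = if m = 0 then 0 else x := by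
  rcases Nat.eq_zero_or_pos m with h0 | hpos
  · subst h0; simp
  · have hm' : m - 1 < d := by omega
    rw [if_neg (by omega)]
    rw [Finset.sum_congr rfl (fun i _ => ?_)]
    · exact Finset.sum_ite_eq' Finset.univ (⟨m - 1, hm'⟩ : Fin d) (fun _ => x) |>.trans
        (by simp)
    · congr 1
      simp only [eq_iff_iff, Fin.ext_iff]
      omega

noncomputable def Zpt (d b : ℕ) (t : ℝ) (j : Fin b) : EuclideanSpace ℝ (Fin d) :=
  WithLp.toLp 2 (fun i => if (j : ℕ) = (i : ℕ) + 1 then t else 0)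

lemma normsq (d : ℕ) (x : EuclideanSpace ℝ (Fin d)) : ‖x‖ ^ 2 = ∑ i, (x i) ^ 2 := by
  rw [EuclideanSpace.norm_eq, Real.sq_sqrt (by positivity)]
  simp [Real.norm_eq_abs, sq_abs]

lemma norm_Zpt (d b : ℕ) (hbd : b ≤ d + 1) (t : ℝ) (j : Fin b) :
    ‖Zpt d b t j‖ ^ 2 = if (j : ℕ) = 0 then 0 else t ^ 2 := by
  rw [normsq]
  have hj : (j : ℕ) ≤ d := by omega
  rw [Finset.sum_congr rfl (fun i _ => ?_)]
  · exact sum_indic d j hj (t ^ 2)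
  · simp only [Zpt, PiLp.toLp_apply]
    split_ifs <;> simp

lemma norm_Zpt_sub (d b : ℕ) (hbd : b ≤ d + 1) (t : ℝ) (j l : Fin b) :
    ‖Zpt d b t j - Zpt d b t l‖ ^ 2 =
      if j = l then 0
      else (if (j : ℕ) = 0 then 0 else t ^ 2) + (if (l : ℕ) = 0 then 0 else t ^ 2) := by
  rcases eq_or_ne j l with rfl | hjl
  · simp
  · rw [if_neg hjl, normsq]
    have hj : (j : ℕ) ≤ d := by omega
    have hl : (l : ℕ) ≤ d := by omega
    have key : ∀ i : Fin d, ((Zpt d b t j - Zpt d b t l) i) ^ 2 =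
        (if (j : ℕ) = (i : ℕ) + 1 then t ^ 2 else 0)
        + (if (l : ℕ) = (i : ℕ) + 1 then t ^ 2 else 0) := by
      intro i
      have hsub : (Zpt d b t j - Zpt d b t l) i = Zpt d b t j i - Zpt d b t l i := rfl
      rw [hsub]
      simp only [Zpt, PiLp.toLp_apply]
      have hne : ¬((j : ℕ) = (i : ℕ) + 1 ∧ (l : ℕ) = (i : ℕ) + 1) := by
        rintro ⟨h1, h2⟩
        exact hjl (Fin.ext (by omega))
      split_ifs with h1 h2 h2
      · exact absurd ⟨h1, h2⟩ hne
      · ring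
      · ring
      · ring
    rw [Finset.sum_congr rfl (fun i _ => key i), Finset.sum_add_distrib,
        sum_indic d j hj (t ^ 2), sum_indic d l hl (t ^ 2)]



noncomputable def Kf (b : ℕ) (a c : ℝ) : Matrix (Fin b) (Fin b) ℝ :=
  Matrix.of fun j l => if j = l then 1 else if (j : ℕ) = 0 ∨ (l : ℕ) = 0 then a else c

noncomputable def Mf (b : ℕ) (a c : ℝ) : Matrix (Fin b) (Fin b) ℝ :=
  Matrix.of fun p l =>
    if (p : ℕ) = 0 ∧ (l : ℕ) = 0 then 1 + ((b : ℝ) - 1) * c / (1 - c)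
    else if (p : ℕ) = 0 ∨ (l : ℕ) = 0 then -a / (1 - c)
    else if p = l then 1 / (1 - c) else 0

lemma KM (b : ℕ) (hb : 2 ≤ b) (a c : ℝ) (hac : a * a = c) (hc : (1 : ℝ) - c ≠ 0) :
    Kf b a c * Mf b a c = 1 := by
  have hb0 : 0 < b := by omega
  set b0 : Fin b := ⟨0, hb0⟩ with hb0def
  have hb0v : (b0 : ℕ) = 0 := rfl
  -- entry evaluations
  have hK00 : Kf b a c b0 b0 = 1 := by simp [Kf]
  have hM00 : Mf b a c b0 b0 = 1 + ((b : ℝ) - 1) * c / (1 - c) := by simp [Mf, hb0v]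
  have hK0p : ∀ p : Fin b, (p : ℕ) ≠ 0 → Kf b a c b0 p = a := by
    intro p hp
    have : b0 ≠ p := fun h => hp (h ▸ hb0v)
    simp [Kf, this, hb0v]
  have hKp0 : ∀ p : Fin b, (p : ℕ) ≠ 0 → Kf b a c p b0 = a := by
    intro p hp
    have : p ≠ b0 := fun h => hp (h ▸ rfl)
    simp [Kf, this, hp, hb0v]
  have hKpq : ∀ p q : Fin b, (p : ℕ) ≠ 0 → (q : ℕ) ≠ 0 →
      Kf b a c p q = if p = q then 1 else c := by
    intro p q hp hq; simp [Kf, hp, hq]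
  have hM0q : ∀ q : Fin b, (q : ℕ) ≠ 0 → Mf b a c b0 q = -a / (1 - c) := by
    intro q hq; simp [Mf, hq, hb0v]
  have hMp0 : ∀ p : Fin b, (p : ℕ) ≠ 0 → Mf b a c p b0 = -a / (1 - c) := by
    intro p hp; simp [Mf, hp, hb0v]
  have hMpq : ∀ p q : Fin b, (p : ℕ) ≠ 0 → (q : ℕ) ≠ 0 →
      Mf b a c p q = if p = q then 1 / (1 - c) else 0 := by
    intro p q hp hq; simp [Mf, hp, hq]
  have hval : ∀ p : Fin b, p ∈ Finset.univ.erase b0 → (p : ℕ) ≠ 0 := by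
    intro p hp h
    exact Finset.ne_of_mem_erase hp (Fin.ext (h.trans hb0v.symm))
  have hcard : (Finset.univ.erase b0).card = b - 1 := by
    rw [Finset.card_erase_of_mem (Finset.mem_univ b0), Finset.card_univ, Fintype.card_fin]
  have hcast : ((b - 1 : ℕ) : ℝ) = (b : ℝ) - 1 := by
    have h1 : (1 : ℕ) ≤ b := by omega
    push_cast [h1]; ring
  ext j l
  rw [Matrix.mul_apply, ← Finset.add_sum_erase Finset.univ _ (Finset.mem_univ b0)]
  rcases eq_or_ne j b0 with rfl | hj
  · rcases eq_or_ne l b0 with rfl | hl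
    · -- j = b0, l = b0
      have hbody : ∀ p ∈ Finset.univ.erase b0,
          Kf b a c b0 p * Mf b a c p b0 = a * (-a / (1 - c)) := by
        intro p hp
        rw [hK0p p (hval p hp), hMp0 p (hval p hp)]
      rw [hK00, hM00, Matrix.one_apply_eq, Finset.sum_congr rfl hbody,
          Finset.sum_const, hcard, nsmul_eq_mul, hcast]
      field_simp
      nlinarith [hac]
    · -- j = b0, l ≠ b0
      have hl0 : (l : ℕ) ≠ 0 := fun h => hl (Fin.ext (h.trans hb0v.symm))
      have hbody : ∀ p ∈ Finset.univ.erase b0,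
          Kf b a c b0 p * Mf b a c p l = if p = l then a * (1 / (1 - c)) else 0 := by
        intro p hp
        rw [hK0p p (hval p hp), hMpq p l (hval p hp) hl0, mul_ite, mul_zero]
      rw [hK00, hM0q l hl0, Matrix.one_apply_ne (Ne.symm hl), Finset.sum_congr rfl hbody,
          Finset.sum_ite_eq' _ l (fun _ => a * (1 / (1 - c))),
          if_pos (Finset.mem_erase.2 ⟨hl, Finset.mem_univ l⟩)]
      field_simp
      ring
  · have hj0 : (j : ℕ) ≠ 0 := fun h => hj (Fin.ext (h.trans hb0v.symm))
    rcases eq_or_ne l b0 with rfl | hl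
    · -- j ≠ b0, l = b0
      have hbody : ∀ p ∈ Finset.univ.erase b0,
          Kf b a c j p * Mf b a c p b0 =
            (if p = j then (1 - c) * (-a / (1 - c)) else 0) + c * (-a / (1 - c)) := by
        intro p hp
        rw [hKpq j p hj0 (hval p hp), hMp0 p (hval p hp)]
        split_ifs with h1 h2 h2
        · ring
        · exact absurd h1.symm h2
        · exact absurd h2.symm h1
        · ring
      rw [hKp0 j hj0, hM00, Matrix.one_apply_ne hj, Finset.sum_congr rfl hbody,
          Finset.sum_add_distrib,
          Finset.sum_ite_eq' _ j (fun _ => (1 - c) * (-a / (1 - c))),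
          if_pos (Finset.mem_erase.2 ⟨hj, Finset.mem_univ j⟩),
          Finset.sum_const, hcard, nsmul_eq_mul, hcast]
      field_simp
      ring
    · -- j ≠ b0, l ≠ b0
      have hl0 : (l : ℕ) ≠ 0 := fun h => hl (Fin.ext (h.trans hb0v.symm))
      have hbody : ∀ p ∈ Finset.univ.erase b0,
          Kf b a c j p * Mf b a c p l =
            if p = l then (if j = p then (1:ℝ) else c) * (1 / (1 - c)) else 0 := by
        intro p hp
        rw [hKpq j p hj0 (hval p hp), hMpq p l (hval p hp) hl0]
        split_ifs <;> ring
      rw [hKp0 j hj0, hM0q l hl0, Finset.sum_congr rfl hbody,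
          Finset.sum_ite_eq' _ l (fun p => (if j = p then (1:ℝ) else c) * (1 / (1 - c))),
          if_pos (Finset.mem_erase.2 ⟨hl, Finset.mem_univ l⟩)]
      rcases eq_or_ne j l with rfl | hjl
      · rw [if_pos rfl, Matrix.one_apply_eq]
        field_simp
        nlinarith [hac]
      · rw [if_neg hjl, Matrix.one_apply_ne hjl]
        field_simp
        nlinarith [hac]




noncomputable def Gf (d b : ℕ) (s : ℝ) : Matrix (Fin d) (Fin b) ℝ :=
  Matrix.of fun i p => if (p : ℕ) = (i : ℕ) + 1 then s else 0

set_option maxHeartbeats 1000000 in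
lemma traceGMG (d b : ℕ) (hb : 2 ≤ b) (hbd : b ≤ d + 1) (s a c : ℝ) :
    Matrix.trace (Gf d b s * Mf b a c * (Gf d b s)ᵀ) =
      ((b : ℝ) - 1) * (s ^ 2 * (1 / (1 - c))) := by
  have hdiag : ∀ i : Fin d,
      (Gf d b s * Mf b a c * (Gf d b s)ᵀ) i i =
        if (i : ℕ) + 1 < b then s ^ 2 * (1 / (1 - c)) else 0 := by
    intro i
    rw [Matrix.mul_apply]
    by_cases h : (i : ℕ) + 1 < b
    · set p0 : Fin b := ⟨(i : ℕ) + 1, h⟩ with hp0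
      have hGrow : ∀ p : Fin b, Gf d b s i p = if p = p0 then s else 0 := by
        intro p
        have hiff : ((p : ℕ) = (i : ℕ) + 1) ↔ p = p0 := by
          constructor
          · intro hh; exact Fin.ext (by simp [hp0, ← hh])
          · intro hh; subst hh; rfl
        simp only [Gf, Matrix.of_apply]
        exact if_congr hiff rfl rfl
      have hinner : ∀ q : Fin b, (Gf d b s * Mf b a c) i q = s * Mf b a c p0 q := by
        intro q
        rw [Matrix.mul_apply,
            Finset.sum_congr rfl (fun p _ => by rw [hGrow p, ite_mul, zero_mul]),
            Finset.sum_ite_eq' _ p0 (fun p => s * Mf b a c p q),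
            if_pos (Finset.mem_univ p0)]
      have hbody : ∀ q ∈ Finset.univ,
          (Gf d b s * Mf b a c) i q * (Gf d b s)ᵀ q i =
            if q = p0 then s * Mf b a c p0 q * s else 0 := by
        intro q _
        rw [hinner q, Matrix.transpose_apply, hGrow q, mul_ite, mul_zero]
      rw [Finset.sum_congr rfl hbody,
          Finset.sum_ite_eq' _ p0 (fun q => s * Mf b a c p0 q * s),
          if_pos (Finset.mem_univ p0), if_pos h]
      have hMdiag : Mf b a c p0 p0 = 1 / (1 - c) := by
        simp [Mf, hp0]
      rw [hMdiag]; ring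
    · rw [if_neg h, Finset.sum_eq_zero]
      intro q _
      have hzero : ∀ p : Fin b, Gf d b s i p = 0 := by
        intro p
        simp only [Gf, Matrix.of_apply, ite_eq_right_iff]
        intro hc
        exact absurd (hc ▸ p.isLt) h
      rw [Matrix.mul_apply, Finset.sum_eq_zero (fun p _ => by rw [hzero p, zero_mul]),
          zero_mul]
  rw [Matrix.trace]
  simp only [Matrix.diag]
  rw [Finset.sum_congr rfl (fun i _ => hdiag i)]
  have : ∀ i : Fin d, ((i : ℕ) + 1 < b) ↔ ((i : ℕ) ∈ Finset.range (b - 1)) := by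
    intro i; rw [Finset.mem_range]; omega
  calc (∑ i : Fin d, if (i : ℕ) + 1 < b then s ^ 2 * (1 / (1 - c)) else 0)
      = ∑ i : Fin d, (if (i : ℕ) ∈ Finset.range (b - 1) then s ^ 2 * (1 / (1 - c)) else 0) := by
        refine Finset.sum_congr rfl (fun i _ => ?_)
        rw [if_congr (this i) rfl rfl]
    _ = ∑ n ∈ Finset.range d, (if n ∈ Finset.range (b - 1) then s ^ 2 * (1 / (1 - c)) else 0) :=
        Fin.sum_univ_eq_sum_range
          (fun n => if n ∈ Finset.range (b - 1) then s ^ 2 * (1 / (1 - c)) else 0) d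
    _ = ∑ n ∈ Finset.range d ∩ Finset.range (b - 1), s ^ 2 * (1 / (1 - c)) :=
        Finset.sum_ite_mem _ _ _
    _ = ((b : ℝ) - 1) * (s ^ 2 * (1 / (1 - c))) := by
        have hint : Finset.range d ∩ Finset.range (b - 1) = Finset.range (b - 1) := by
          ext n
          simp only [Finset.mem_inter, Finset.mem_range]
          omega
        rw [hint, Finset.sum_const, Finset.card_range, nsmul_eq_mul]
        congr 1
        have h1 : (1 : ℕ) ≤ b := by omega
        push_cast [h1]; ring


end RBFAux

/-- For the RBF kernel with noiseless observations and `2 ≤ b ≤ d + 1`, for every `ε > 0`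
there is a design of `b` points whose posterior gradient covariance at the origin has trace
at most `(1 + d - b) + ε`. -/
theorem rbf_noiseless_error_function_bound (d b : ℕ) (hd : 1 ≤ d)
    (hb2 : 2 ≤ b) (hbd : b ≤ d + 1) (ε : ℝ) (hε : 0 < ε) :
    ∃ Z : Fin b → EuclideanSpace ℝ (Fin d),
      ∀ (K : Matrix (Fin b) (Fin b) ℝ) (G : Matrix (Fin d) (Fin b) ℝ),
        K = Matrix.of (fun j l => Real.exp (-(1 / 2) * ‖Z j - Z l‖ ^ 2)) →
        G = Matrix.of (fun i j => Z j i * Real.exp (-(1 / 2) * ‖Z j‖ ^ 2)) →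
        IsUnit K.det ∧
          (d : ℝ) - Matrix.trace (G * K⁻¹ * Gᵀ) ≤ (1 + (d : ℝ) - (b : ℝ)) + ε := by
  classical
  have hbR : (2 : ℝ) ≤ (b : ℝ) := by exact_mod_cast hb2
  have hbpos : (0 : ℝ) < (b : ℝ) := by linarith
  set u : ℝ := ε / b with hu
  have hu0 : 0 < u := div_pos hε hbpos
  set t : ℝ := Real.sqrt u with htdef
  have ht2 : t ^ 2 = u := Real.sq_sqrt hu0.le
  set a : ℝ := Real.exp (-(u / 2)) with hadef
  set c : ℝ := Real.exp (-u) with hcdef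
  have hac : a * a = c := by rw [hadef, hcdef, ← Real.exp_add]; ring_nf
  have hclt : c < 1 := by
    rw [hcdef, show (1 : ℝ) = Real.exp 0 from (Real.exp_zero).symm]
    exact Real.exp_lt_exp.mpr (by linarith)
  have h1c : (0 : ℝ) < 1 - c := by linarith
  have hcpos : (0 : ℝ) < c := Real.exp_pos _
  refine ⟨RBFAux.Zpt d b t, ?_⟩
  intro K G hK hG
  have hKeq : K = RBFAux.Kf b a c := by
    rw [hK]
    ext j l
    simp only [Matrix.of_apply, RBFAux.Kf]
    rw [RBFAux.norm_Zpt_sub d b hbd t j l]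
    rcases eq_or_ne j l with rfl | hjl
    · simp
    · rw [if_neg hjl, if_neg hjl, ht2]
      by_cases hj : (j : ℕ) = 0
      · have hl : (l : ℕ) ≠ 0 := fun h => hjl (Fin.ext (by omega))
        rw [if_pos hj, if_neg hl, if_pos (Or.inl hj), hadef]
        congr 1
        ring
      · by_cases hl : (l : ℕ) = 0
        · rw [if_neg hj, if_pos hl, if_pos (Or.inr hl), hadef]
          congr 1
          ring
        · rw [if_neg hj, if_neg hl, if_neg (by push_neg; exact ⟨hj, hl⟩), hcdef]
          congr 1
          ring
  have hGeq : G = RBFAux.Gf d b (t * a) := by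
    rw [hG]
    ext i p
    simp only [Matrix.of_apply, RBFAux.Gf]
    rw [RBFAux.norm_Zpt d b hbd t p]
    simp only [RBFAux.Zpt, PiLp.toLp_apply]
    by_cases hp : (p : ℕ) = (i : ℕ) + 1
    · have hp0 : (p : ℕ) ≠ 0 := by omega
      rw [if_pos hp, if_pos hp, if_neg hp0, ht2, hadef]
      congr 1
      ring
    · rw [if_neg hp, if_neg hp, zero_mul]
  have hKM := RBFAux.KM b hb2 a c hac (by linarith)
  constructor
  · rw [hKeq]
    have hdet : (RBFAux.Kf b a c).det * (RBFAux.Mf b a c).det = 1 := by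
      rw [← Matrix.det_mul, hKM, Matrix.det_one]
    exact IsUnit.of_mul_eq_one _ hdet
  · have hinv : K⁻¹ = RBFAux.Mf b a c := by
      rw [hKeq]
      exact Matrix.inv_eq_right_inv hKM
    rw [hGeq, hinv, RBFAux.traceGMG d b hb2 hbd (t * a) a c]
    have hta : (t * a) ^ 2 = u * c := by
      rw [mul_pow, ht2, sq, hac]
    rw [hta]
    have h1cu : 1 - c ≤ u := by
      have := Real.add_one_le_exp (-u)
      rw [← hcdef] at this
      linarith
    have hkey : c ≤ u * c * (1 / (1 - c)) := by
      rw [mul_one_div, le_div_iff₀ h1c]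
      nlinarith [hcpos, h1cu]
    have h3 : ((b : ℝ) - 1) * c ≤ ((b : ℝ) - 1) * (u * c * (1 / (1 - c))) :=
      mul_le_mul_of_nonneg_left hkey (by linarith)
    have h4 : ((b : ℝ) - 1) * (1 - u) ≤ ((b : ℝ) - 1) * c :=
      mul_le_mul_of_nonneg_left (by linarith) (by linarith)
    have hbu : ((b : ℝ) - 1) * u ≤ ε := by
      have hble : (b : ℝ) - 1 ≤ (b : ℝ) := by linarith
      calc ((b : ℝ) - 1) * u ≤ (b : ℝ) * u :=
            mul_le_mul_of_nonneg_right hble hu0.le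
        _ = ε := by rw [hu]; field_simp
    nlinarith [h3, h4, hbu]
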